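/- arXiv:1706.09703 — 4 statements merged into one kernel-verified Lean document; each statement's English description precedes it below -/
import Mathlib

section
/- Let n be a positive integer, let E = EuclideanSpace ℝ (Fin n), let f : E → E be continuous, and let V : E → ℝ be continuously differentiable with V(0) = 0. Let β > 0 and set Ω = {y ∈ E | V(y) ≤ β}. Assume that for every y ∈ Ω with y ≠ 0 the derivative of V along the vector field is strictly negative, i.e. (fderiv ℝ V y)(f y) < 0. If x : ℝ → E satisfies HasDerivAt x (f (x t)) t for all t ≥ 0 and V(x 0) ≤ β, then V(x t) ≤ β for all t ≥ 0; that is, the sublevel set Ω is positively invariant for the dynamics ẋ = f(x). -/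
/-- Positive invariance of a sublevel set of a Lyapunov function:
if `V` strictly decreases along the vector field `f` on the sublevel set
`Ω = {y | V y ≤ β}` (away from the equilibrium `0`), then any trajectory of
`ẋ = f x` starting in `Ω` stays in `Ω` for all `t ≥ 0`. -/
theorem sublevel_set_positively_invariant
    (n : ℕ) (hn : 0 < n)
    (f : EuclideanSpace ℝ (Fin n) → EuclideanSpace ℝ (Fin n)) (hf : Continuous f)
    (V : EuclideanSpace ℝ (Fin n) → ℝ) (hV : ContDiff ℝ 1 V)
    (hV0 : V (0 : EuclideanSpace ℝ (Fin n)) = 0)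
    (β : ℝ) (hβ : 0 < β)
    (hdec : ∀ y : EuclideanSpace ℝ (Fin n), V y ≤ β → y ≠ 0 → fderiv ℝ V y (f y) < 0)
    (x : ℝ → EuclideanSpace ℝ (Fin n))
    (hx : ∀ t : ℝ, 0 ≤ t → HasDerivAt x (f (x t)) t)
    (hx0 : V (x 0) ≤ β) :
    ∀ t : ℝ, 0 ≤ t → V (x t) ≤ β := by
  by_contra h
  push_neg at h
  obtain ⟨t1, ht1, hgt1⟩ := h
  set g : ℝ → ℝ := fun t => V (x t) with hgdef
  have hg : ∀ t, 0 ≤ t → HasDerivAt g (fderiv ℝ V (x t) (f (x t))) t := by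
    intro t ht
    exact ((hV.differentiable one_ne_zero).differentiableAt.hasFDerivAt).comp_hasDerivAt t (hx t ht)
  have hgc : ∀ t, 0 ≤ t → ContinuousAt g t := fun t ht => (hg t ht).continuousAt
  set S := {t : ℝ | t ∈ Set.Icc 0 t1 ∧ g t ≤ β} with hSdef
  have h0S : (0:ℝ) ∈ S := ⟨⟨le_rfl, ht1⟩, hx0⟩
  have hbdd : BddAbove S := ⟨t1, fun s hs => hs.1.2⟩
  have hSclosed : IsClosed S := by
    have hcont : ContinuousOn g (Set.Icc 0 t1) :=
      fun t ht => (hgc t ht.1).continuousWithinAt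
    have : S = Set.Icc 0 t1 ∩ g ⁻¹' Set.Iic β := rfl
    rw [this]
    exact (hcont.preimage_isClosed_of_isClosed isClosed_Icc isClosed_Iic)
  set t0 := sSup S with ht0def
  have ht0S : t0 ∈ S := hSclosed.csSup_mem ⟨0, h0S⟩ hbdd
  have ht00 : 0 ≤ t0 := ht0S.1.1
  have ht0t1 : t0 ≤ t1 := ht0S.1.2
  have hgt0le : g t0 ≤ β := ht0S.2
  have ht0lt : t0 < t1 := lt_of_le_of_ne ht0t1 (by
    intro hEq
    rw [hEq] at hgt0le
    exact absurd hgt0le (not_le.mpr hgt1))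
  have hgt : ∀ s, s ∈ Set.Ioc t0 t1 → β < g s := by
    intro s hs
    by_contra hle
    push_neg at hle
    have : s ∈ S := ⟨⟨le_trans ht00 hs.1.le, hs.2⟩, hle⟩
    exact absurd (le_csSup hbdd this) (not_le.mpr hs.1)
  have hgt0 : g t0 = β := by
    refine le_antisymm hgt0le ?_
    have htend : Filter.Tendsto g (nhdsWithin t0 (Set.Ioi t0)) (nhds (g t0)) :=
      (hgc t0 ht00).tendsto.mono_left nhdsWithin_le_nhds
    refine ge_of_tendsto htend ?_
    filter_upwards [Ioo_mem_nhdsGT_of_mem (Set.left_mem_Ico.mpr ht0lt)] with s hs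
    exact (hgt s ⟨hs.1, hs.2.le⟩).le
  have hx0ne : x t0 ≠ 0 := by
    intro hEq
    have : g t0 = 0 := by simp [hgdef, hEq, hV0]
    rw [hgt0] at this
    exact absurd this (ne_of_gt hβ)
  have hd : fderiv ℝ V (x t0) (f (x t0)) < 0 := hdec (x t0) hgt0le hx0ne
  -- slope tends to the (negative) derivative from the right, but slope is positive
  have hslope : Filter.Tendsto (slope g t0) (nhdsWithin t0 {t0}ᶜ)
      (nhds (fderiv ℝ V (x t0) (f (x t0)))) :=
    hasDerivAt_iff_tendsto_slope.mp (hg t0 ht00)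
  have hslope' : Filter.Tendsto (slope g t0) (nhdsWithin t0 (Set.Ioi t0))
      (nhds (fderiv ℝ V (x t0) (f (x t0)))) :=
    hslope.mono_left (nhdsWithin_mono t0 (fun s hs => ne_of_gt hs))
  have hev_neg : ∀ᶠ s in nhdsWithin t0 (Set.Ioi t0), slope g t0 s < 0 :=
    hslope' (Iio_mem_nhds hd)
  have hev_pos : ∀ᶠ s in nhdsWithin t0 (Set.Ioi t0), 0 < slope g t0 s := by
    filter_upwards [Ioo_mem_nhdsGT_of_mem (Set.left_mem_Ico.mpr ht0lt)] with s hs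
    have hβs : β < g s := hgt s ⟨hs.1, hs.2.le⟩
    have : 0 < g s - g t0 := by rw [hgt0]; linarith
    have hspos : 0 < s - t0 := sub_pos.mpr hs.1
    rw [slope_def_field]
    exact div_pos (by rw [hgt0]; linarith) hspos
  obtain ⟨s, hneg, hpos⟩ := (hev_neg.and hev_pos).exists
  linarith
end

section
/- Let n be a positive integer, let E = EuclideanSpace ℝ (Fin n), let f : E → E be continuous with f(0) = 0, and let V : E → ℝ be continuously differentiable with V(0) = 0. Let β > 0 and set Ω = {y ∈ E | V(y) ≤ β}. Assume that for every y ∈ Ω with y ≠ 0 one has (fderiv ℝ V y)(f y) < 0. If x : ℝ → E satisfies HasDerivAt x (f (x t)) t for all t ≥ 0 and V(x 0) ≤ β, then the function t ↦ V(x t) is nonincreasing on [0, ∞): for all 0 ≤ s ≤ t, V(x t) ≤ V(x s). -/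
/-- Monotone decrease of a Lyapunov function along trajectories:
if `V` strictly decreases along the vector field `f` on the sublevel set
`Ω = {y | V y ≤ β}` away from the equilibrium (where `f 0 = 0`), then along any
trajectory of `ẋ = f x` starting in `Ω`, the map `t ↦ V (x t)` is nonincreasing
on `[0, ∞)`. -/
theorem lyapunov_nonincreasing_along_trajectories
    (n : ℕ) (hn : 0 < n)
    (f : EuclideanSpace ℝ (Fin n) → EuclideanSpace ℝ (Fin n)) (hf : Continuous f)
    (hf0 : f (0 : EuclideanSpace ℝ (Fin n)) = 0)
    (V : EuclideanSpace ℝ (Fin n) → ℝ) (hV : ContDiff ℝ 1 V)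
    (hV0 : V (0 : EuclideanSpace ℝ (Fin n)) = 0)
    (β : ℝ) (hβ : 0 < β)
    (hdec : ∀ y : EuclideanSpace ℝ (Fin n), V y ≤ β → y ≠ 0 → fderiv ℝ V y (f y) < 0)
    (x : ℝ → EuclideanSpace ℝ (Fin n))
    (hx : ∀ t : ℝ, 0 ≤ t → HasDerivAt x (f (x t)) t)
    (hx0 : V (x 0) ≤ β) :
    ∀ s t : ℝ, 0 ≤ s → s ≤ t → V (x t) ≤ V (x s) := by
  set g : ℝ → ℝ := fun t => V (x t) with hg
  have hg' : ∀ t : ℝ, 0 ≤ t → HasDerivAt g (fderiv ℝ V (x t) (f (x t))) t := by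
    intro t ht
    exact ((hV.differentiable one_ne_zero (x t)).hasFDerivAt).comp_hasDerivAt t (hx t ht)
  have hcont : ∀ t : ℝ, 0 ≤ t → ContinuousAt g t := fun t ht => (hg' t ht).continuousAt
  -- derivative nonpositive when g t ≤ β
  have hderiv_nonpos : ∀ t : ℝ, 0 ≤ t → g t ≤ β → deriv g t ≤ 0 := by
    intro t ht hle
    rw [(hg' t ht).deriv]
    by_cases h0 : x t = 0
    · simp [h0, hf0]
    · exact (hdec (x t) hle h0).le
  -- key monotonicity lemma on intervals where g ≤ β
  have key : ∀ a b : ℝ, 0 ≤ a → (∀ u, u ∈ Set.Icc a b → g u ≤ β) → AntitoneOn g (Set.Icc a b) := by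
    intro a b ha hbd
    apply antitoneOn_of_deriv_nonpos (convex_Icc a b)
    · exact fun u hu => (hcont u (ha.trans hu.1)).continuousWithinAt
    · intro u hu
      rw [interior_Icc] at hu
      exact ((hg' u (ha.trans hu.1.le)).differentiableAt).differentiableWithinAt
    · intro u hu
      rw [interior_Icc] at hu
      exact hderiv_nonpos u (ha.trans hu.1.le) (hbd u ⟨hu.1.le, hu.2.le⟩)
  -- invariance: g t ≤ β for all t ≥ 0
  have inv : ∀ t : ℝ, 0 ≤ t → g t ≤ β := by
    by_contra hcon
    push_neg at hcon
    obtain ⟨t0, ht0, hgt0⟩ := hcon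
    set S : Set ℝ := {t | 0 ≤ t ∧ β < g t} with hS
    have hSne : S.Nonempty := ⟨t0, ht0, hgt0⟩
    have hSbd : BddBelow S := ⟨0, fun t ht => ht.1⟩
    set t1 : ℝ := sInf S with ht1
    have ht1nn : 0 ≤ t1 := le_csInf hSne fun t ht => ht.1
    have hlt : ∀ u : ℝ, 0 ≤ u → u < t1 → g u ≤ β := by
      intro u hu hut
      by_contra h
      push_neg at h
      exact absurd (csInf_le hSbd ⟨hu, h⟩) (not_le.mpr hut)
    -- g t1 ≤ β
    have hle1 : g t1 ≤ β := by
      rcases eq_or_lt_of_le ht1nn with h | h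
      · rw [← h]; exact hx0
      · have htend : Filter.Tendsto g (nhdsWithin t1 (Set.Iio t1)) (nhds (g t1)) :=
          ((hcont t1 ht1nn).tendsto).mono_left nhdsWithin_le_nhds
        refine le_of_tendsto htend ?_
        filter_upwards [self_mem_nhdsWithin,
          Ioo_mem_nhdsLT_of_mem ⟨h, le_refl t1⟩] with u hu hu'
        exact hlt u hu'.1.le hu
    -- g t1 ≥ β
    have hge1 : β ≤ g t1 := by
      have htend : Filter.Tendsto g (nhdsWithin t1 (Set.Ici t1)) (nhds (g t1)) :=
        ((hcont t1 ht1nn).tendsto).mono_left nhdsWithin_le_nhds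
      refine ge_of_tendsto_of_frequently htend ?_
      rw [Filter.frequently_iff]
      intro U hU
      rw [mem_nhdsGE_iff_exists_Ico_subset] at hU
      obtain ⟨ε, hε, hsub⟩ := hU
      obtain ⟨s, hsS, hs⟩ := Real.lt_sInf_add_pos hSne (show (0:ℝ) < ε - t1 from by
        simpa using hε)
      refine ⟨s, hsub ⟨csInf_le hSbd hsS, by linarith⟩, hsS.2.le⟩

    have heq : g t1 = β := le_antisymm hle1 hge1
    -- x t1 ≠ 0
    have hx1ne : x t1 ≠ 0 := by
      intro h
      rw [hg] at heq
      simp only [h, hV0] at heq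
      linarith
    have hderiv_neg : fderiv ℝ V (x t1) (f (x t1)) < 0 := hdec (x t1) heq.le hx1ne
    -- slope negative just to the right of t1 ⇒ g < β there
    have hslope : Filter.Tendsto (slope g t1) (nhdsWithin t1 {t1}ᶜ)
        (nhds (fderiv ℝ V (x t1) (f (x t1)))) :=
      hasDerivAt_iff_tendsto_slope.mp (hg' t1 ht1nn)
    have hev : ∀ᶠ u in nhdsWithin t1 {t1}ᶜ, slope g t1 u < 0 :=
      hslope.eventually (Filter.Tendsto.eventually_lt_const hderiv_neg Filter.tendsto_id)
    have hev' : ∀ᶠ u in nhdsWithin t1 (Set.Ioi t1), g u < β := by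
      have hmono : nhdsWithin t1 (Set.Ioi t1) ≤ nhdsWithin t1 {t1}ᶜ :=
        nhdsWithin_mono t1 (fun u hu => ne_of_gt hu)
      filter_upwards [hmono hev, self_mem_nhdsWithin] with u hu hu'
      rw [slope_def_field] at hu
      have hpos : 0 < u - t1 := sub_pos.mpr hu'
      rcases div_neg_iff.mp hu with ⟨_, h2⟩ | ⟨h1, _⟩
      · linarith
      · linarith
    obtain ⟨w, hw, hsub⟩ := mem_nhdsGT_iff_exists_Ioo_subset.mp hev'
    obtain ⟨r, hrS, hr⟩ := Real.lt_sInf_add_pos hSne (show (0:ℝ) < w - t1 from by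
      simpa using hw)
    have hrt1 : t1 ≤ r := csInf_le hSbd hrS
    have hrne : r ≠ t1 := fun h => absurd hrS.2 (by rw [h, heq]; exact lt_irrefl β)
    have : g r < β := hsub ⟨lt_of_le_of_ne hrt1 (Ne.symm hrne), by linarith⟩
    exact absurd hrS.2 (not_lt.mpr this.le)
  -- conclude
  intro s t hs hst
  exact key 0 t le_rfl (fun u hu => inv u hu.1) ⟨hs, hst⟩ ⟨hs.trans hst, le_rfl⟩ hst
end

section
/- Let n be a positive integer, let E = EuclideanSpace ℝ (Fin n), let f : E → E be continuous with f(0) = 0, and let V : E → ℝ be continuously differentiable with V(0) = 0. Let β > 0 and suppose the sublevel set Ω = {y ∈ E | V(y) ≤ β} is compact, V(y) > 0 for every y ∈ Ω with y ≠ 0, and (fderiv ℝ V y)(f y) < 0 for every y ∈ Ω with y ≠ 0. If x : ℝ → E satisfies HasDerivAt x (f (x t)) t for all t ≥ 0 and V(x 0) ≤ β, then x(t) → 0 as t → ∞ (Tendsto x atTop (nhds 0)). In particular, Ω is contained in the region of attraction of the equilibrium 0. -/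
open Set Filter Topology

/-- Lyapunov sublevel-set theorem for region-of-attraction estimation:
a compact sublevel set `Ω = {y | V y ≤ β}` of a Lyapunov function `V`
(positive definite on `Ω`, strictly decreasing along the flow of `f` on
`Ω \ {0}`) is contained in the region of attraction of the equilibrium `0`:
every trajectory starting in `Ω` converges to `0`. -/
theorem compact_sublevel_subset_region_of_attraction
    (n : ℕ) (hn : 0 < n)
    (f : EuclideanSpace ℝ (Fin n) → EuclideanSpace ℝ (Fin n)) (hf : Continuous f)
    (hf0 : f (0 : EuclideanSpace ℝ (Fin n)) = 0)
    (V : EuclideanSpace ℝ (Fin n) → ℝ) (hV : ContDiff ℝ 1 V)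
    (hV0 : V (0 : EuclideanSpace ℝ (Fin n)) = 0)
    (β : ℝ) (hβ : 0 < β)
    (hΩcompact : IsCompact {y : EuclideanSpace ℝ (Fin n) | V y ≤ β})
    (hVpos : ∀ y : EuclideanSpace ℝ (Fin n), V y ≤ β → y ≠ 0 → 0 < V y)
    (hdec : ∀ y : EuclideanSpace ℝ (Fin n), V y ≤ β → y ≠ 0 → fderiv ℝ V y (f y) < 0)
    (x : ℝ → EuclideanSpace ℝ (Fin n))
    (hx : ∀ t : ℝ, 0 ≤ t → HasDerivAt x (f (x t)) t)
    (hx0 : V (x 0) ≤ β) :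
    Filter.Tendsto x Filter.atTop (nhds (0 : EuclideanSpace ℝ (Fin n))) := by
  set W : EuclideanSpace ℝ (Fin n) → ℝ := fun y => fderiv ℝ V y (f y) with hWdef
  have hVdiff : Differentiable ℝ V := hV.differentiable one_ne_zero
  have hVc : Continuous V := hV.continuous
  have hWcont : Continuous W := (hV.continuous_fderiv one_ne_zero).clm_apply hf
  have hW0 : W 0 = 0 := by simp [hWdef, hf0]
  have hWnonpos : ∀ y, V y ≤ β → W y ≤ 0 := by
    intro y hy
    by_cases h : y = 0
    · simp [h, hW0]
    · exact (hdec y hy h).le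
  set g : ℝ → ℝ := fun t => V (x t) with hgdef
  have hg' : ∀ t, 0 ≤ t → HasDerivAt g (W (x t)) t := fun t ht =>
    (hVdiff (x t)).hasFDerivAt.comp_hasDerivAt t (hx t ht)
  have hgc : ∀ t, 0 ≤ t → ContinuousAt g t := fun t ht => (hg' t ht).continuousAt
  -- invariance of the sublevel set
  have hinv : ∀ t, 0 ≤ t → g t ≤ β := by
    by_contra h
    push_neg at h
    obtain ⟨t₀, ht₀, hgt₀⟩ := h
    set S : Set ℝ := {t | 0 ≤ t ∧ β < g t} with hSdef
    have hSne : S.Nonempty := ⟨t₀, ht₀, hgt₀⟩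
    have hSbdd : BddBelow S := ⟨0, fun s hs => hs.1⟩
    set t₁ := sInf S with ht₁def
    have ht₁0 : 0 ≤ t₁ := le_csInf hSne fun s hs => hs.1
    have ht₁cl : t₁ ∈ closure S := csInf_mem_closure hSne hSbdd
    -- g t₁ ≤ β
    have hgt₁ : g t₁ ≤ β := by
      by_contra hb
      push_neg at hb
      rcases eq_or_lt_of_le ht₁0 with h0 | h0
      · exact absurd hx0 (by simpa [hgdef, ← h0] using hb.not_ge)
      · have hev : ∀ᶠ s in 𝓝 t₁, β < g s := (hgc t₁ ht₁0).eventually_const_lt hb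
        have hev2 : ∀ᶠ s in 𝓝 t₁, 0 < s := eventually_gt_nhds h0
        have hcomb : ∀ᶠ s in 𝓝[<] t₁, s ∈ S ∧ s < t₁ := by
          filter_upwards [(hev.and hev2).filter_mono nhdsWithin_le_nhds,
            self_mem_nhdsWithin] with s hs hs'
          exact ⟨⟨hs.2.le, hs.1⟩, hs'⟩
        obtain ⟨s, hsS, hst⟩ := hcomb.exists
        exact absurd (csInf_le hSbdd hsS) (not_le.mpr hst)
    have hSsub : S ⊆ Ioi t₁ := by
      intro s hs
      rcases eq_or_lt_of_le (csInf_le hSbdd hs) with h | h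
      · have hts : t₁ = s := ht₁def.trans h
        exact absurd hgt₁ (by rw [hts]; exact not_le.mpr hs.2)
      · exact h
    -- eventually to the right, g < β
    have hlt : ∀ᶠ s in 𝓝[>] t₁, g s < β := by
      rcases lt_or_eq_of_le hgt₁ with hcase | hcase
      · exact ((hgc t₁ ht₁0).eventually_lt_const hcase).filter_mono nhdsWithin_le_nhds
      · have hx₁ : x t₁ ≠ 0 := by
          intro h
          rw [hgdef] at hcase
          simp only [h, hV0] at hcase
          linarith
        have hd : W (x t₁) < 0 := hdec _ (le_of_eq hcase) hx₁
        have hslope := (hasDerivAt_iff_tendsto_slope.mp (hg' t₁ ht₁0)).mono_left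
          (nhdsWithin_mono _ (fun s hs => ne_of_gt hs))
        have h1 : ∀ᶠ s in 𝓝[>] t₁, slope g t₁ s < 0 := hslope.eventually_lt_const hd
        filter_upwards [h1, self_mem_nhdsWithin] with s hs hs'
        have h2 : (g s - g t₁) / (s - t₁) < 0 := by simpa [slope_def_field] using hs
        have h3 : 0 < s - t₁ := sub_pos.mpr hs'
        nlinarith [div_mul_cancel₀ (g s - g t₁) (ne_of_gt h3)]
    have hne : (𝓝[S] t₁).NeBot := mem_closure_iff_nhdsWithin_neBot.mp ht₁cl
    have hlt' : ∀ᶠ s in 𝓝[S] t₁, g s < β := hlt.filter_mono (nhdsWithin_mono _ hSsub)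
    obtain ⟨s, hs1, hs2⟩ := (hlt'.and self_mem_nhdsWithin).exists
    exact absurd hs1 (not_lt.mpr hs2.2.le)
  -- g is antitone on [0, ∞)
  have hanti : AntitoneOn g (Ici 0) := by
    apply antitoneOn_of_deriv_nonpos (convex_Ici 0)
    · exact fun t ht => (hgc t ht).continuousWithinAt
    · intro t ht
      rw [interior_Ici] at ht
      exact (hg' t (le_of_lt ht)).differentiableAt.differentiableWithinAt
    · intro t ht
      rw [interior_Ici] at ht
      rw [(hg' t (le_of_lt ht)).deriv]
      exact hWnonpos _ (hinv t (le_of_lt ht))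
  -- nonnegativity of g
  have hgnn : ∀ t, 0 ≤ t → 0 ≤ g t := by
    intro t ht
    by_cases h : x t = 0
    · simp [hgdef, h, hV0]
    · exact (hVpos _ (hinv t ht) h).le
  -- main convergence
  rw [NormedAddCommGroup.tendsto_nhds_zero]
  intro ε hε
  rw [Filter.eventually_atTop]
  -- the set of points of Ω outside the ε-ball
  set K : Set (EuclideanSpace ℝ (Fin n)) := {y | V y ≤ β ∧ ε ≤ ‖y‖} with hKdef
  have hKcl : IsClosed K :=
    (isClosed_le hVc continuous_const).inter (isClosed_le continuous_const continuous_norm)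
  have hKcompact : IsCompact K :=
    hΩcompact.of_isClosed_subset hKcl (fun y hy => hy.1)
  by_cases hKne : K.Nonempty
  · obtain ⟨y₀, hy₀K, hy₀min⟩ := hKcompact.exists_isMinOn hKne hVc.continuousOn
    have hy₀ne : y₀ ≠ 0 := by
      intro h
      rw [h] at hy₀K
      simp only [hKdef, Set.mem_setOf_eq, norm_zero] at hy₀K
      linarith
    set m := V y₀ with hmdef
    have hm : 0 < m := hVpos y₀ hy₀K.1 hy₀ne
    -- there is a time T with g T < m
    have hT : ∃ T, 0 ≤ T ∧ g T < m := by
      by_contra hc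
      push_neg at hc
      -- trajectory stays in the compact annulus K' = {m ≤ V ≤ β}
      set K' : Set (EuclideanSpace ℝ (Fin n)) := {y | m ≤ V y ∧ V y ≤ β} with hK'def
      have hK'cl : IsClosed K' :=
        (isClosed_le continuous_const hVc).inter (isClosed_le hVc continuous_const)
      have hK'compact : IsCompact K' :=
        hΩcompact.of_isClosed_subset hK'cl (fun y hy => hy.2)
      have hK'ne : K'.Nonempty := ⟨x 0, hc 0 le_rfl, hx0⟩
      obtain ⟨z, hzK', hzmax⟩ := hK'compact.exists_isMaxOn hK'ne hWcont.continuousOn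
      have hzne : z ≠ 0 := by
        intro h
        rw [h] at hzK'
        simp only [hK'def, Set.mem_setOf_eq, hV0] at hzK'
        linarith
      have hWz : W z < 0 := hdec z hzK'.2 hzne
      set δ := -W z with hδdef
      have hδ : 0 < δ := by simpa [hδdef] using hWz
      -- h t := g t + δ t is antitone on [0, ∞)
      set h : ℝ → ℝ := fun t => g t + δ * t with hhdef
      have hanti2 : AntitoneOn h (Ici 0) := by
        apply antitoneOn_of_deriv_nonpos (convex_Ici 0)
        · intro t ht
          exact ((hgc t ht).add (by fun_prop)).continuousWithinAt
        · intro t ht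
          rw [interior_Ici] at ht
          exact (((hg' t ht.le).add ((hasDerivAt_id t).const_mul δ)).differentiableAt).differentiableWithinAt
        · intro t ht
          rw [interior_Ici] at ht
          have hd : HasDerivAt h (W (x t) + δ * 1) t :=
            (hg' t ht.le).add ((hasDerivAt_id t).const_mul δ)
          rw [hd.deriv]
          have hxK' : x t ∈ K' := ⟨hc t ht.le, hinv t ht.le⟩
          have h1 : W (x t) ≤ W z := hzmax hxK'
          have h2 : δ = -W z := rfl
          rw [h2]; linarith
      set T := (g 0 - m) / δ + 1 with hTdef
      have hT0 : 0 ≤ T := by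
        rw [hTdef]
        have : m ≤ g 0 := hc 0 le_rfl
        have : 0 ≤ (g 0 - m) / δ := div_nonneg (by linarith) hδ.le
        linarith
      have := hanti2 (self_mem_Ici) hT0 hT0
      -- h T ≤ h 0 gives g T ≤ g 0 - δ T
      have hgT : g T ≤ g 0 - δ * T := by
        simp only [hhdef] at this
        simp only [mul_zero, add_zero] at this
        linarith
      have hδT : δ * T = (g 0 - m) + δ := by
        rw [hTdef, mul_add, mul_one, mul_div_cancel₀ _ (ne_of_gt hδ)]
      have : g T < m := by rw [hδT] at hgT; linarith
      exact absurd this (not_lt.mpr (hc T hT0))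
    obtain ⟨T, hT0, hgT⟩ := hT
    refine ⟨T, fun t ht => ?_⟩
    have ht0 : 0 ≤ t := le_trans hT0 ht
    have hgt : g t < m := lt_of_le_of_lt (hanti hT0 ht0 ht) hgT
    by_contra hcon
    push_neg at hcon
    have hxK : x t ∈ K := ⟨hinv t ht0, hcon⟩
    exact absurd (hy₀min hxK) (not_le.mpr hgt)
  · -- K empty: every point of Ω is within ε
    refine ⟨0, fun t ht => ?_⟩
    by_contra hcon
    push_neg at hcon
    exact hKne ⟨x t, hinv t ht, hcon⟩
end

section
/- Let n be a positive integer, let E = EuclideanSpace ℝ (Fin n), let f : E → E be continuous with f(0) = 0, let V : E → ℝ be continuously differentiable with V(0) = 0, and let h : E → ℝ. Let β > 0, suppose Ω = {y ∈ E | V(y) ≤ β} is compact, V(y) > 0 and (fderiv ℝ V y)(f y) < 0 for every y ∈ Ω with y ≠ 0, and h(y) ≥ 0 for every y ∈ Ω. Then for every x : ℝ → E satisfying HasDerivAt x (f (x t)) t for all t ≥ 0 with V(x 0) ≤ β, one has h(x t) ≥ 0 for all t ≥ 0 and x(t) → 0 as t → ∞. In other words, Ω is contained in the constrained stability region of the equilibrium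 0 subject to the inequality constraint h ≥ 0. -/
open Filter Topology Set

/-- Constrained stability region estimate: a compact sublevel set
`Ω = {y | V y ≤ β}` of a Lyapunov function on which the inequality constraint
`h ≥ 0` holds is contained in the constrained stability region of the
equilibrium `0`: trajectories starting in `Ω` remain feasible (`h (x t) ≥ 0`)
for all `t ≥ 0` and converge to `0`. -/
theorem sublevel_subset_constrained_stability_region
    (n : ℕ) (hn : 0 < n)
    (f : EuclideanSpace ℝ (Fin n) → EuclideanSpace ℝ (Fin n)) (hf : Continuous f)
    (hf0 : f (0 : EuclideanSpace ℝ (Fin n)) = 0)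
    (V : EuclideanSpace ℝ (Fin n) → ℝ) (hV : ContDiff ℝ 1 V)
    (hV0 : V (0 : EuclideanSpace ℝ (Fin n)) = 0)
    (h : EuclideanSpace ℝ (Fin n) → ℝ)
    (β : ℝ) (hβ : 0 < β)
    (hΩcompact : IsCompact {y : EuclideanSpace ℝ (Fin n) | V y ≤ β})
    (hVpos : ∀ y : EuclideanSpace ℝ (Fin n), V y ≤ β → y ≠ 0 → 0 < V y)
    (hdec : ∀ y : EuclideanSpace ℝ (Fin n), V y ≤ β → y ≠ 0 → fderiv ℝ V y (f y) < 0)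
    (hfeas : ∀ y : EuclideanSpace ℝ (Fin n), V y ≤ β → 0 ≤ h y)
    (x : ℝ → EuclideanSpace ℝ (Fin n))
    (hx : ∀ t : ℝ, 0 ≤ t → HasDerivAt x (f (x t)) t)
    (hx0 : V (x 0) ≤ β) :
    (∀ t : ℝ, 0 ≤ t → 0 ≤ h (x t)) ∧
      Filter.Tendsto x Filter.atTop (nhds (0 : EuclideanSpace ℝ (Fin n))) := by
  have hVdiff : Differentiable ℝ V := hV.differentiable one_ne_zero
  set W : ℝ → ℝ := fun t => V (x t) with hWdef
  have hW' : ∀ t : ℝ, 0 ≤ t → HasDerivAt W (fderiv ℝ V (x t) (f (x t))) t := fun t ht =>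
    (hVdiff (x t)).hasFDerivAt.comp_hasDerivAt t (hx t ht)
  set g : EuclideanSpace ℝ (Fin n) → ℝ := fun y => fderiv ℝ V y (f y) with hgdef
  have hgcont : Continuous g := (hV.continuous_fderiv one_ne_zero).clm_apply hf
  have hg0 : g 0 = 0 := by simp [hgdef, hf0]
  have hgle : ∀ y, V y ≤ β → g y ≤ 0 := by
    intro y hy
    by_cases h0 : y = 0
    · simp [h0, hg0]
    · exact (hdec y hy h0).le
  -- Invariance of the sublevel set
  have hinv : ∀ t : ℝ, 0 ≤ t → W t ≤ β := by
    by_contra hc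
    push_neg at hc
    obtain ⟨t₀, ht₀, hWt₀⟩ := hc
    set S : Set ℝ := {t | 0 ≤ t ∧ β < W t} with hSdef
    have hSne : S.Nonempty := ⟨t₀, ht₀, hWt₀⟩
    have hSbdd : BddBelow S := ⟨0, fun s hs => hs.1⟩
    set T := sInf S with hTdef
    have hT0 : 0 ≤ T := le_csInf hSne fun s hs => hs.1
    have hWcontT : ContinuousAt W T := (hW' T hT0).continuousAt
    have hclos : T ∈ closure S := csInf_mem_closure hSne hSbdd
    haveI hneS : (𝓝[S] T).NeBot := mem_closure_iff_nhdsWithin_neBot.mp hclos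
    have hWTge : β ≤ W T := by
      refine ge_of_tendsto (hWcontT.tendsto.mono_left (nhdsWithin_le_nhds : 𝓝[S] T ≤ 𝓝 T)) ?_
      filter_upwards [self_mem_nhdsWithin] with s hs
      exact hs.2.le
    have hWTle : W T ≤ β := by
      rcases hT0.eq_or_lt with hT | hT
      · rw [← hT]; exact hx0
      · haveI : (𝓝[<] T).NeBot := inferInstance
        refine le_of_tendsto
          ((hWcontT.tendsto.mono_left nhdsWithin_le_nhds : Tendsto W (𝓝[<] T) (𝓝 (W T)))) ?_
        have hmem : Ioo 0 T ∈ 𝓝[<] T := by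
          have h1 : Ioi (0:ℝ) ∈ 𝓝[<] T := nhdsWithin_le_nhds (Ioi_mem_nhds hT)
          have h2 : Iio T ∈ 𝓝[<] T := self_mem_nhdsWithin
          filter_upwards [h1, h2] with s hs1 hs2
          exact ⟨hs1, hs2⟩
        filter_upwards [hmem] with s hs
        by_contra hcon
        push_neg at hcon
        have : s ∈ S := ⟨hs.1.le, hcon⟩
        exact absurd (csInf_le hSbdd this) (not_le.mpr hs.2)
    have hWT : W T = β := le_antisymm hWTle hWTge
    have hxTne : x T ≠ 0 := by
      intro hxe
      have : W T = 0 := by rw [hWdef]; simp only; rw [hxe, hV0]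
      rw [hWT] at this; linarith
    have hgneg : g (x T) < 0 := hdec (x T) (le_of_eq hWT) hxTne
    have hslope : Tendsto (slope W T) (𝓝[≠] T) (𝓝 (g (x T))) :=
      hasDerivAt_iff_tendsto_slope.mp (hW' T hT0)
    have hev : ∀ᶠ s in 𝓝[≠] T, slope W T s < 0 := hslope.eventually (Iio_mem_nhds hgneg)
    rw [eventually_nhdsWithin_iff, Metric.eventually_nhds_iff] at hev
    obtain ⟨ε, hε, hevε⟩ := hev
    obtain ⟨s, hsS, hslt⟩ := exists_lt_of_csInf_lt hSne (by linarith : sInf S < T + ε)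
    have hTnotS : T ∉ S := fun hTS => absurd hWT (by have := hTS.2; intro he; linarith)
    have hTs : T < s := lt_of_le_of_ne (csInf_le hSbdd hsS) (fun he => hTnotS (he ▸ hsS))
    have hdist : dist s T < ε := by
      rw [Real.dist_eq, abs_of_pos (by linarith)]; linarith
    have hsl := hevε hdist (ne_of_gt hTs)
    rw [slope_def_field] at hsl
    have hpos : 0 < (W s - W T) / (s - T) :=
      div_pos (by have := hsS.2; linarith) (by linarith)
    linarith
  -- W is antitone on [0, ∞)
  have hWcont : ContinuousOn W (Ici 0) := fun t ht => (hW' t ht).continuousAt.continuousWithinAt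
  have hanti : AntitoneOn W (Ici 0) := by
    apply antitoneOn_of_deriv_nonpos (convex_Ici 0) hWcont
    · intro t ht
      rw [interior_Ici] at ht
      exact (hW' t ht.le).differentiableAt.differentiableWithinAt
    · intro t ht
      rw [interior_Ici] at ht
      rw [(hW' t ht.le).deriv]
      exact hgle _ (hinv t ht.le)
  -- W eventually below any positive level
  have hWto : ∀ m : ℝ, 0 < m → ∀ᶠ t in atTop, W t < m := by
    intro m hm
    by_contra hc
    rw [not_eventually] at hc
    have hall : ∀ t : ℝ, 0 ≤ t → m ≤ W t := by
      intro t ht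
      obtain ⟨s, hs, hms⟩ := frequently_atTop.mp hc t
      exact le_trans (not_lt.mp hms) (hanti ht (le_trans ht hs) hs)
    have hKclosed : IsCompact {y : EuclideanSpace ℝ (Fin n) | V y ≤ β ∧ m ≤ V y} := by
      have : {y : EuclideanSpace ℝ (Fin n) | V y ≤ β ∧ m ≤ V y}
          = {y | V y ≤ β} ∩ {y | m ≤ V y} := rfl
      rw [this]
      exact hΩcompact.inter_right (isClosed_le continuous_const hV.continuous)
    have hKne : ({y : EuclideanSpace ℝ (Fin n) | V y ≤ β ∧ m ≤ V y}).Nonempty :=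
      ⟨x 0, hx0, hall 0 le_rfl⟩
    obtain ⟨y₀, hy₀K, hy₀max⟩ := hKclosed.exists_isMaxOn hKne hgcont.continuousOn
    have hy₀ne : y₀ ≠ 0 := by
      intro he
      have h2 : m ≤ V y₀ := hy₀K.2
      rw [he, hV0] at h2; linarith
    have hδ : 0 < -g y₀ := by
      have := hdec y₀ hy₀K.1 hy₀ne; linarith
    set δ := -g y₀ with hδdef
    set F : ℝ → ℝ := fun t => W t + δ * t with hFdef
    have hF' : ∀ t : ℝ, 0 ≤ t → HasDerivAt F (g (x t) + δ) t := by
      intro t ht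
      have h2 : HasDerivAt (fun s : ℝ => δ * s) δ t := by
        simpa using (hasDerivAt_id t).const_mul δ
      exact (hW' t ht).add h2
    have hFanti : AntitoneOn F (Ici 0) := by
      apply antitoneOn_of_deriv_nonpos (convex_Ici 0)
      · exact fun t ht => ((hF' t ht).continuousAt).continuousWithinAt
      · intro t ht
        rw [interior_Ici] at ht
        exact (hF' t ht.le).differentiableAt.differentiableWithinAt
      · intro t ht
        rw [interior_Ici] at ht
        rw [(hF' t ht.le).deriv]
        have hxtK : x t ∈ {y : EuclideanSpace ℝ (Fin n) | V y ≤ β ∧ m ≤ V y} :=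
          ⟨hinv t ht.le, hall t ht.le⟩
        have h3 : g (x t) ≤ g y₀ := hy₀max hxtK
        have h4 : δ = -g y₀ := hδdef
        linarith
    have ht₁ : (0:ℝ) ≤ (β + 1) / δ := div_nonneg (by linarith) hδ.le
    have hF₁ : F ((β + 1) / δ) ≤ F 0 := hFanti (le_refl (0:ℝ)) ht₁ ht₁
    have hδmul : δ * ((β + 1) / δ) = β + 1 := mul_div_cancel₀ _ (ne_of_gt hδ)
    have hF0 : F 0 = W 0 := by
      show W 0 + δ * 0 = W 0
      ring
    have h1 : m + (β + 1) ≤ F ((β + 1) / δ) := by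
      have h5 := hall _ ht₁
      show m + (β + 1) ≤ W ((β + 1) / δ) + δ * ((β + 1) / δ)
      rw [hδmul]; linarith
    have h2 : W 0 ≤ β := hx0
    linarith
  constructor
  · intro t ht
    exact hfeas _ (hinv t ht)
  · rw [NormedAddCommGroup.tendsto_nhds_zero]
    intro ε hε
    by_cases hKe : ({y : EuclideanSpace ℝ (Fin n) | V y ≤ β ∧ ε ≤ ‖y‖}).Nonempty
    · have hKc : IsCompact {y : EuclideanSpace ℝ (Fin n) | V y ≤ β ∧ ε ≤ ‖y‖} := by
        have : {y : EuclideanSpace ℝ (Fin n) | V y ≤ β ∧ ε ≤ ‖y‖}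
            = {y | V y ≤ β} ∩ {y | ε ≤ ‖y‖} := rfl
        rw [this]
        exact hΩcompact.inter_right (isClosed_le continuous_const continuous_norm)
      obtain ⟨y₀, hy₀K, hy₀min⟩ := hKc.exists_isMinOn hKe hV.continuous.continuousOn
      have hy₀ne : y₀ ≠ 0 := by
        intro he
        have h2 : ε ≤ ‖y₀‖ := hy₀K.2
        rw [he, norm_zero] at h2; linarith
      have hm : 0 < V y₀ := hVpos y₀ hy₀K.1 hy₀ne
      filter_upwards [hWto (V y₀) hm, eventually_ge_atTop (0:ℝ)] with t hWt ht
      by_contra hcon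
      push_neg at hcon
      have hxtK : x t ∈ {y : EuclideanSpace ℝ (Fin n) | V y ≤ β ∧ ε ≤ ‖y‖} :=
        ⟨hinv t ht, hcon⟩
      exact absurd (hy₀min hxtK) (not_le.mpr hWt)
    · filter_upwards [eventually_ge_atTop (0:ℝ)] with t ht
      by_contra hcon
      push_neg at hcon
      exact hKe ⟨x t, hinv t ht, hcon⟩
end
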